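/- Let A be a 2×2 real symmetric positive definite matrix, k₀ ≥ 2 an integer, and m ≥ 1 a positive integer. Let g : ℕ → ℝ² and α : ℕ → ℝ satisfy g_{j+1} = (I − α_j A)g_j for all j, with the BB1 stepsize α_j = ⟨g_{j-1}, g_{j-1}⟩/⟨g_{j-1}, A g_{j-1}⟩ for every j with 1 ≤ j ≤ k₀+m+2 and j ≠ k₀+m (α₀ arbitrary). Suppose g_j ≠ 0 for all 0 ≤ j ≤ k₀+m+2, and let q ∈ ℝ², q ≠ 0, satisfy (I − α_{k₀-2} A)q = g_{k₀-2}. Set α_{k₀+m} = 2/( ⟨q,Aq⟩/‖q‖² + ⟨g_{k₀},Ag_{k₀}⟩/‖g_{k₀}‖² + √( (⟨q,Aq⟩/‖q‖² − ⟨g_{k₀},Ag_{k₀}⟩/‖g_{k₀}‖²)² + 4⟨q, A g_{k₀}⟩²/(‖q‖²·‖g_{k₀}‖²) ) ), i.e., the stepsize α̃_{k₀} computed at iteration k₀ is used with retard m at iteration k₀+m. Then g_{k₀+m+3} = 0. -/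

import Mathlib

open Matrix

-- helper: positivity of self dot product
lemma dp_self_pos (v : Fin 2 → ℝ) (h : v ≠ 0) : 0 < v ⬝ᵥ v := by
  have h0 : v ⬝ᵥ v ≠ 0 := fun hc => h (dotProduct_self_eq_zero.mp hc)
  have h1 : 0 ≤ v ⬝ᵥ v := by
    have : v ⬝ᵥ v = v 0 * v 0 + v 1 * v 1 := by simp [dotProduct, Fin.sum_univ_two]
    nlinarith [mul_self_nonneg (v 0), mul_self_nonneg (v 1)]
  exact lt_of_le_of_ne h1 (Ne.symm h0)

-- Cayley–Hamilton for 2×2 via mulVec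
lemma ch2 (A : Matrix (Fin 2) (Fin 2) ℝ) (x : Fin 2 → ℝ) :
    A *ᵥ (A *ᵥ x) = A.trace • (A *ᵥ x) - A.det • x := by
  funext i
  fin_cases i <;>
    simp [Matrix.mulVec, dotProduct, Fin.sum_univ_two, Matrix.trace, Matrix.det_fin_two,
      Matrix.diag] <;> ring

lemma ortho_param (q s : Fin 2 → ℝ) (hq : q ≠ 0) (h : q 0 * s 0 + q 1 * s 1 = 0) :
    ∃ t : ℝ, s 0 = -(t * q 1) ∧ s 1 = t * q 0 := by
  have hcases : q 0 ≠ 0 ∨ q 1 ≠ 0 := by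
    by_contra hc
    push_neg at hc
    exact hq (funext fun i => by fin_cases i <;> simp [hc.1, hc.2])
  rcases hcases with h0 | h1
  · refine ⟨s 1 / q 0, ?_, by field_simp⟩
    field_simp
    linarith [h]
  · refine ⟨-(s 0) / q 1, ?_, ?_⟩
    · field_simp
    · field_simp
      linarith [h]

lemma trace_det_rel (A : Matrix (Fin 2) (Fin 2) ℝ) (hsym : A 0 1 = A 1 0)
    (q s : Fin 2 → ℝ) (hq : q ≠ 0) (horth : q ⬝ᵥ s = 0) :
    (q ⬝ᵥ (A *ᵥ q)) * (s ⬝ᵥ s) + (s ⬝ᵥ (A *ᵥ s)) * (q ⬝ᵥ q)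
        = A.trace * ((q ⬝ᵥ q) * (s ⬝ᵥ s)) ∧
      (q ⬝ᵥ (A *ᵥ q)) * (s ⬝ᵥ (A *ᵥ s)) - (q ⬝ᵥ (A *ᵥ s)) ^ 2
        = A.det * ((q ⬝ᵥ q) * (s ⬝ᵥ s)) := by
  have horth' : q 0 * s 0 + q 1 * s 1 = 0 := by
    simpa [dotProduct, Fin.sum_univ_two] using horth
  obtain ⟨t, hs0, hs1⟩ := ortho_param q s hq horth'
  simp only [dotProduct, Fin.sum_univ_two, Matrix.mulVec, Matrix.trace, Matrix.det_fin_two,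
    Matrix.diag, hs0, hs1, hsym]
  constructor <;> ring

set_option maxHeartbeats 1000000 in
/-- Corollary 1 specialized to `Ψ(A) = I`: using the stepsize `α̃_{k₀}^{BB1}`
with retard `m` at iteration `k₀ + m` still yields finite termination
`g_{k₀+m+3} = 0`. -/
theorem finite_termination_retard_BB1 {A : Matrix (Fin 2) (Fin 2) ℝ}
    (hA : A.PosDef) (k₀ m : ℕ) (hk₀ : 2 ≤ k₀) (hm : 1 ≤ m)
    (g : ℕ → Fin 2 → ℝ) (α : ℕ → ℝ)
    (hrec : ∀ j, g (j + 1) = g j - α j • (A *ᵥ g j))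
    (hstep : ∀ j, 1 ≤ j → j ≤ k₀ + m + 2 → j ≠ k₀ + m →
      α j = (g (j - 1) ⬝ᵥ g (j - 1)) / (g (j - 1) ⬝ᵥ (A *ᵥ g (j - 1))))
    (hgne : ∀ j, j ≤ k₀ + m + 2 → g j ≠ 0)
    (q : Fin 2 → ℝ) (hq0 : q ≠ 0)
    (hq : q - α (k₀ - 2) • (A *ᵥ q) = g (k₀ - 2))
    (hαk₀m : α (k₀ + m) = 2 /
      ((q ⬝ᵥ (A *ᵥ q)) / (q ⬝ᵥ q) + (g k₀ ⬝ᵥ (A *ᵥ g k₀)) / (g k₀ ⬝ᵥ g k₀) +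
        Real.sqrt (((q ⬝ᵥ (A *ᵥ q)) / (q ⬝ᵥ q) -
            (g k₀ ⬝ᵥ (A *ᵥ g k₀)) / (g k₀ ⬝ᵥ g k₀)) ^ 2 +
          4 * (q ⬝ᵥ (A *ᵥ g k₀)) ^ 2 / ((q ⬝ᵥ q) * (g k₀ ⬝ᵥ g k₀))))) :
    g (k₀ + m + 3) = 0 := by
  -- basic facts about A
  have hAT : Aᵀ = A := by
    have := hA.1
    simpa [Matrix.IsHermitian, Matrix.conjTranspose_eq_transpose_of_trivial] using this
  have hApos : ∀ x : Fin 2 → ℝ, x ≠ 0 → 0 < x ⬝ᵥ (A *ᵥ x) := by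
    intro x hx
    have := hA.dotProduct_mulVec_pos hx
    simpa using this
  have hA01 : A 0 1 = A 1 0 := by
    have := congrFun (congrFun hAT 1) 0
    simpa [Matrix.transpose_apply] using this
  have hdetpos : 0 < A.det := hA.det_pos
  obtain ⟨k, rfl⟩ : ∃ k, k₀ = k + 2 := ⟨k₀ - 2, by omega⟩
  have hgk : g k = q - α k • (A *ᵥ q) := by
    have hk2 : k + 2 - 2 = k := by omega
    rw [hk2] at hq
    exact hq.symm
  -- Step A : orthogonality of q and g (k+2)
  have hgkne : g k ≠ 0 := hgne k (by omega)
  have hAgkne : g k ⬝ᵥ (A *ᵥ g k) ≠ 0 := ne_of_gt (hApos _ hgkne)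
  have hα1 : α (k+1) = (g k ⬝ᵥ g k) / (g k ⬝ᵥ (A *ᵥ g k)) := by
    have := hstep (k+1) (by omega) (by omega) (by omega)
    simpa using this
  have e0 : q ⬝ᵥ g (k+1) = g k ⬝ᵥ g k := by
    rw [hrec k, hgk]
    simp only [Matrix.mulVec, dotProduct, Fin.sum_univ_two, Pi.sub_apply, Pi.smul_apply,
      smul_eq_mul, hA01]
    ring
  have e1 : q ⬝ᵥ (A *ᵥ g (k+1)) = g k ⬝ᵥ (A *ᵥ g k) := by
    rw [hrec k, hgk]
    simp only [Matrix.mulVec, dotProduct, Fin.sum_univ_two, Pi.sub_apply, Pi.smul_apply,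
      smul_eq_mul, hA01]
    ring
  have horth : q ⬝ᵥ g (k+2) = 0 := by
    have h2 : g (k+2) = g (k+1) - α (k+1) • (A *ᵥ g (k+1)) := hrec (k+1)
    rw [h2, dotProduct_sub, dotProduct_smul, e0, e1, smul_eq_mul, hα1,
      div_mul_cancel₀ _ hAgkne, sub_self]
  -- notation
  set s := g (k+2) with hs
  have hsne : s ≠ 0 := hgne (k+2) (by omega)
  have hQ : 0 < q ⬝ᵥ q := dp_self_pos q hq0
  have hS : 0 < s ⬝ᵥ s := dp_self_pos s hsne
  have haa : 0 < q ⬝ᵥ (A *ᵥ q) := hApos q hq0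
  have hbb : 0 < s ⬝ᵥ (A *ᵥ s) := hApos s hsne
  obtain ⟨id1, id2⟩ := trace_det_rel A hA01 q s hq0 horth
  set Q := q ⬝ᵥ q with hQdef
  set S := s ⬝ᵥ s with hSdef
  set aa := q ⬝ᵥ (A *ᵥ q) with haadef
  set bb := s ⬝ᵥ (A *ᵥ s) with hbbdef
  set cc := q ⬝ᵥ (A *ᵥ s) with hccdef
  set T := A.trace with hTdef
  set D := A.det with hDdef
  set E := (aa / Q - bb / S) ^ 2 + 4 * cc ^ 2 / (Q * S) with hEdef
  have hE : 0 ≤ E := by positivity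
  set R := Real.sqrt E with hRdef
  have hR2 : R ^ 2 = E := Real.sq_sqrt hE
  have hR0 : 0 ≤ R := Real.sqrt_nonneg E
  set lam := (aa / Q + bb / S + R) / 2 with hlamdef
  have hlampos : 0 < lam := by
    have h1 : 0 < aa / Q := div_pos haa hQ
    have h2 : 0 < bb / S := div_pos hbb hS
    positivity
  have hlamne : lam ≠ 0 := ne_of_gt hlampos
  have hαP : α (k + 2 + m) = 1 / lam := by
    rw [hαk₀m, hlamdef, one_div_div]
  have hQne : Q ≠ 0 := ne_of_gt hQ
  have hSne : S ≠ 0 := ne_of_gt hS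
  have hTab : aa / Q + bb / S = T := by
    field_simp
    linarith [id1]
  have hDab : (aa / Q) * (bb / S) - cc ^ 2 / (Q * S) = D := by
    field_simp
    linarith [id2]
  have eq1 : (2 * lam - (aa / Q + bb / S)) ^ 2
      = (aa / Q - bb / S) ^ 2 + 4 * cc ^ 2 / (Q * S) := by
    have h2 : 2 * lam - (aa / Q + bb / S) = R := by rw [hlamdef]; ring
    rw [h2, hR2, hEdef]
  clear_value Q S aa bb cc T D E R lam
  have hquad : lam ^ 2 = T * lam - D := by
    linear_combination eq1 / 4 + lam * hTab - hDab
  set mu := T - lam with hmudef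
  clear_value mu
  have hmulam : lam * mu = D := by rw [hmudef]; linear_combination -hquad
  have hmupos : 0 < mu := by
    have hdl : 0 < D / lam := div_pos hdetpos hlampos
    have hmu : mu = D / lam := by
      rw [← hmulam, mul_comm, mul_div_assoc, div_self hlamne, mul_one]
    rw [hmu]
    exact hdl
  have hmune : mu ≠ 0 := ne_of_gt hmupos
  -- eigenvector step
  set P := k + 2 + m with hPdef
  have hαPl : lam * α P = 1 := by
    rw [hαP]
    field_simp
  have heig : A *ᵥ g (P + 1) = mu • g (P + 1) := by
    rw [hrec P, mulVec_sub, mulVec_smul, ch2]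
    funext i
    simp only [Pi.sub_apply, Pi.smul_apply, smul_eq_mul]
    linear_combination ((A *ᵥ g P) i * α P - g P i) * hmudef +
      (g P i * (T - lam) - (A *ᵥ g P) i) * hαPl + g P i * α P * hquad +
      ((A *ᵥ g P) i * α P) * hTdef - (α P * g P i) * hDdef
  have hgP1ne : g (P + 1) ≠ 0 := hgne (P+1) (by simp only [hPdef]; omega)
  have hdpP1 : 0 < g (P+1) ⬝ᵥ g (P+1) := dp_self_pos _ hgP1ne
  have hdpP1ne : g (P+1) ⬝ᵥ g (P+1) ≠ 0 := ne_of_gt hdpP1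
  have hαP2 : α (P + 2) = 1 / mu := by
    have h := hstep (P+2) (by simp only [hPdef]; omega) (by simp only [hPdef]; omega)
      (by simp only [hPdef]; omega)
    have hidx : P + 2 - 1 = P + 1 := by omega
    rw [hidx] at h
    rw [h, heig, dotProduct_smul, smul_eq_mul, mul_comm mu _, ← div_div,
      div_self hdpP1ne]
  have hgP2 : g (P + 2) = (1 - α (P+1) * mu) • g (P+1) := by
    rw [hrec (P+1), heig]
    funext i
    simp only [Pi.sub_apply, Pi.smul_apply, smul_eq_mul]
    ring
  have hfinal : g (P + 3) = 0 := by
    have h3 : g (P + 3) = g (P+2) - α (P+2) • (A *ᵥ g (P+2)) := hrec (P+2)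
    rw [h3, hgP2, mulVec_smul, heig, hαP2]
    funext i
    simp only [Pi.sub_apply, Pi.smul_apply, smul_eq_mul, Pi.zero_apply]
    field_simp
    ring
  show g (P + 3) = 0
  exact hfinal
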